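/- arXiv:2602.21016 — 3 statements merged into one kernel-verified Lean document; each statement's English description precedes it below -/
import Mathlib

section
/- Bilinear cut-rank rule: for Γ ∈ 𝔽₂^{a×b} with rank_{𝔽₂}(Γ) = k, the real 2^a × 2^b matrix R with entries R_{u,v} = (-1)^{uᵀΓv} has real rank exactly 2^k. -/
open Matrix

/-- Sign of a bit: `(-1)^c` as a real number. -/
def sgn (c : ZMod 2) : ℝ := if c = 0 then 1 else -1

lemma sgn_add (c d : ZMod 2) : sgn (c + d) = sgn c * sgn d := by
  rcases (show ∀ c : ZMod 2, c = 0 ∨ c = 1 by decide) c with rfl | rfl <;>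
    rcases (show ∀ c : ZMod 2, c = 0 ∨ c = 1 by decide) d with rfl | rfl <;>
    simp [sgn, show (1:ZMod 2) + 1 = 0 from rfl, show (1:ZMod 2) ≠ 0 by decide]

lemma sum_sgn {a : ℕ} (x : Fin a → ZMod 2) :
    ∑ w : Fin a → ZMod 2, sgn (x ⬝ᵥ w) = if x = 0 then (2:ℝ)^a else 0 := by
  split_ifs with hx
  · subst hx
    simp [sgn, Finset.card_univ, Fintype.card_pi]
  · obtain ⟨i, hi⟩ : ∃ i, x i ≠ 0 := by
      by_contra h; push_neg at h; exact hx (funext h)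
    have hxi : x i = 1 := by
      revert hi; generalize x i = c; revert c; decide
    apply Finset.sum_ninvolution (g := fun w => w + Pi.single i 1)
    · intro w
      have : x ⬝ᵥ (w + Pi.single i 1) = x ⬝ᵥ w + 1 := by
        rw [dotProduct_add, dotProduct_single, hxi, one_mul]
      rw [this, sgn_add]
      have : sgn 1 = -1 := by norm_num [sgn]
      rw [this]; ring
    · intro w _
      intro h
      have := congrFun h i
      simp at this
    · intro w; exact Finset.mem_univ _
    · intro w
      funext j
      simp only [Pi.add_apply]
      generalize w j = c; generalize (Pi.single i 1 : Fin a → ZMod 2) j = d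
      revert c d; decide

theorem bilinear_cut_rank_rule (a b : ℕ)
    (Γ : Matrix (Fin a) (Fin b) (ZMod 2))
    (R : Matrix (Fin a → ZMod 2) (Fin b → ZMod 2) ℝ)
    (hR : ∀ u v, R u v = sgn (u ⬝ᵥ Γ.mulVec v)) :
    R.rank = 2 ^ Γ.rank := by
  classical
  set H : Matrix (Fin a → ZMod 2) (Fin a → ZMod 2) ℝ :=
    Matrix.of (fun u w => sgn (u ⬝ᵥ w)) with hH
  set P : Matrix (Fin a → ZMod 2) (Fin b → ZMod 2) ℝ :=
    Matrix.of (fun w v => if Γ.mulVec v = w then 1 else 0) with hP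
  have hHP : R = H * P := by
    ext u v
    rw [hR, Matrix.mul_apply]
    simp only [hH, hP, Matrix.of_apply, mul_ite, mul_one, mul_zero]
    rw [Finset.sum_ite_eq]
    simp
  have addeq : ∀ u v : Fin a → ZMod 2, u + v = 0 ↔ u = v := by
    intro u v
    constructor
    · intro h; funext i
      have h' : u i + v i = 0 := congrFun h i
      revert h'
      generalize u i = c; generalize v i = d
      revert c d; decide
    · rintro rfl; funext i
      show u i + u i = 0
      generalize u i = c; revert c; decide
  have hHH : H * H = ((2:ℝ)^a) • (1 : Matrix (Fin a → ZMod 2) (Fin a → ZMod 2) ℝ) := by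
    ext u v
    rw [Matrix.mul_apply]
    have h1 : ∀ w, H u w * H w v = sgn ((u + v) ⬝ᵥ w) := by
      intro w
      simp only [hH, Matrix.of_apply]
      rw [add_dotProduct, sgn_add, dotProduct_comm w v]
    rw [Finset.sum_congr rfl fun w _ => h1 w, sum_sgn, Matrix.smul_apply, Matrix.one_apply,
      if_congr (addeq u v) rfl rfl]
    split_ifs <;> simp
  have hdet : IsUnit H.det := by
    apply Matrix.isUnit_det_of_right_inverse (B := ((2:ℝ)^a)⁻¹ • H)
    rw [Matrix.mul_smul, hHH, smul_smul, inv_mul_cancel₀ (by positivity), one_smul]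
  rw [hHP, Matrix.rank_mul_eq_right_of_isUnit_det H P hdet]
  -- now rank P = 2 ^ Γ.rank
  rw [Matrix.rank_eq_finrank_span_cols]
  set W := LinearMap.range Γ.mulVecLin with hW
  have hcols : Set.range Pᵀ = (fun w => Pi.single w (1:ℝ)) '' (W : Set (Fin a → ZMod 2)) := by
    ext f
    simp only [Set.mem_range, Set.mem_image, SetLike.mem_coe, hW, LinearMap.mem_range]
    constructor
    · rintro ⟨v, rfl⟩
      refine ⟨Γ.mulVec v, ⟨v, rfl⟩, ?_⟩
      funext w
      simp [hP, Pi.single_apply, eq_comm, Matrix.mulVecLin_apply]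
    · rintro ⟨w₀, ⟨v, rfl⟩, rfl⟩
      refine ⟨v, ?_⟩
      funext w
      simp [hP, Pi.single_apply, eq_comm, Matrix.mulVecLin_apply]
  rw [show Set.range P.col = Set.range Pᵀ from rfl, hcols]
  have hinj : Function.Injective (fun w : Fin a → ZMod 2 => Pi.single w (1:ℝ)) := by
    intro w w' h
    by_contra hne
    have := congrFun h w
    simp [Pi.single_apply, Ne.symm hne] at this
  have li : LinearIndependent ℝ
      ((↑) : ((fun w => Pi.single w (1:ℝ)) '' (W : Set (Fin a → ZMod 2))) → ((Fin a → ZMod 2) → ℝ)) := by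
    have hbli := (Pi.basisFun ℝ (Fin a → ZMod 2)).linearIndependent
    have h2 : LinearIndependent ℝ (fun w : Fin a → ZMod 2 => Pi.single w (1:ℝ)) := by
      convert hbli using 1
      funext w
      simp
    exact ((linearIndepOn_id_range_iff hinj).mpr h2).mono (Set.image_subset_range _ _)
  haveI : Fintype ((fun w => Pi.single w (1:ℝ)) '' (W : Set (Fin a → ZMod 2))) :=
    Set.Finite.fintype (Set.toFinite _)
  rw [finrank_span_set_eq_card li, Set.toFinset_card]
  have hcard : Fintype.card ((fun w => Pi.single w (1:ℝ)) '' (W : Set (Fin a → ZMod 2)))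
      = Fintype.card W := by
    apply Fintype.card_congr
    exact (Equiv.Set.image _ _ hinj).symm
  rw [hcard]
  have : Fintype.card W = Fintype.card (ZMod 2) ^ Module.finrank (ZMod 2) W :=
    Module.card_eq_pow_finrank
  rw [this, ZMod.card]
  rfl
end

section
/- Schmidt-rank lower bound from a restricted bilinear core: let f : {0,1}^a × {0,1}^b → {0,1} and define R_{u,v} = (-1)^{f(u,v)}. Suppose there exist index subsets I ⊆ {1,…,a}, J ⊆ {1,…,b} and assignments β, α of the remaining bits such that the restricted function f̃(x,y) = f(u,v) with u_I = x, u_{A∖I} = β, v_J = y, v_{B∖J} = α can be written as f̃(x,y) = xᵀΓy ⊕ φ(x) ⊕ ψ(y) for some Γ ∈ 𝔽₂^{|I|×|J|} with rank_{𝔽₂}(Γ) = t. Then rank_ℝ(R) ≥ 2^t. -/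
open Matrix

lemma zmod2_cases : ∀ c : ZMod 2, c = 0 ∨ c = 1 := by decide

lemma sgn_zero : sgn 0 = 1 := if_pos rfl

lemma sgn_one : sgn 1 = -1 := if_neg (by decide)

lemma sgn_sq (c : ZMod 2) : sgn c * sgn c = 1 := by
  rcases zmod2_cases c with rfl | rfl <;> simp only [sgn_zero, sgn_one] <;> norm_num

lemma zmod2_add_eq_zero {c d : ZMod 2} (h : c + d = 0) : c = d := by
  have : ∀ c d : ZMod 2, c + d = 0 → c = d := by decide
  exact this _ _ h

lemma sgn_flip (c : ZMod 2) : sgn (c + 1) = -sgn c := by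
  rcases zmod2_cases c with rfl | rfl <;>
    simp only [zero_add, show (1 : ZMod 2) + 1 = 0 by decide, sgn_zero, sgn_one] <;> norm_num

/-- Orthogonality: the character `x ↦ (-1)^{x ⬝ u}` sums to zero for nonzero `u`. -/
lemma sum_sgn_dot {ι : Type*} [Fintype ι] [DecidableEq ι] (u : ι → ZMod 2) (hu : u ≠ 0) :
    ∑ x : ι → ZMod 2, sgn (x ⬝ᵥ u) = 0 := by
  obtain ⟨i, hi⟩ : ∃ i, u i ≠ 0 := by
    by_contra h; push_neg at h; exact hu (funext h)
  have hui : u i = 1 := by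
    have : ∀ c : ZMod 2, c ≠ 0 → c = 1 := by decide
    exact this _ hi
  have key : ∑ x : ι → ZMod 2, sgn (x ⬝ᵥ u)
      = ∑ x : ι → ZMod 2, sgn ((x + Pi.single i 1) ⬝ᵥ u) :=
    (Fintype.sum_equiv (Equiv.addRight (Pi.single i 1)) _ _ (fun x => rfl)).symm
  have hsingle : ∀ x : ι → ZMod 2, (x + Pi.single i 1) ⬝ᵥ u = x ⬝ᵥ u + 1 := by
    intro x
    rw [add_dotProduct, single_dotProduct, hui, mul_one]
  have h2 : ∑ x : ι → ZMod 2, sgn ((x + Pi.single i 1) ⬝ᵥ u)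
      = -∑ x : ι → ZMod 2, sgn (x ⬝ᵥ u) := by
    calc ∑ x : ι → ZMod 2, sgn ((x + Pi.single i 1) ⬝ᵥ u)
        = ∑ x : ι → ZMod 2, -sgn (x ⬝ᵥ u) := by
          refine Finset.sum_congr rfl fun x _ => ?_
          rw [hsingle, sgn_flip]
      _ = -∑ x : ι → ZMod 2, sgn (x ⬝ᵥ u) := Finset.sum_neg_distrib _
  have := key.trans h2
  linarith

theorem schmidt_rank_lower_bound_from_core (a b t : ℕ)
    (f : (Fin a → ZMod 2) → (Fin b → ZMod 2) → ZMod 2)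
    (R : Matrix (Fin a → ZMod 2) (Fin b → ZMod 2) ℝ)
    (hR : ∀ u v, R u v = sgn (f u v))
    (I : Finset (Fin a)) (J : Finset (Fin b))
    (β : {i : Fin a // i ∉ I} → ZMod 2) (α : {j : Fin b // j ∉ J} → ZMod 2)
    (Γ : Matrix {i : Fin a // i ∈ I} {j : Fin b // j ∈ J} (ZMod 2))
    (φ : ({i : Fin a // i ∈ I} → ZMod 2) → ZMod 2)
    (ψ : ({j : Fin b // j ∈ J} → ZMod 2) → ZMod 2)
    (hcore : ∀ (x : {i : Fin a // i ∈ I} → ZMod 2) (y : {j : Fin b // j ∈ J} → ZMod 2),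
      f (fun i => if h : i ∈ I then x ⟨i, h⟩ else β ⟨i, h⟩)
        (fun j => if h : j ∈ J then y ⟨j, h⟩ else α ⟨j, h⟩)
        = x ⬝ᵥ Γ.mulVec y + φ x + ψ y)
    (hΓ : Γ.rank = t) :
    2 ^ t ≤ R.rank := by
  classical
  -- the image submodule of Γ
  set W := LinearMap.range Γ.mulVecLin with hWdef
  haveI : Fintype W := Fintype.ofFinite _
  have hcardW : Fintype.card W = 2 ^ t := by
    rw [Module.card_eq_pow_finrank (K := ZMod 2) (V := W), ZMod.card]
    congr 1
  -- pick preimages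
  have hpick : ∀ w : W, ∃ y, Γ.mulVec y = (w :({i : Fin a // i ∈ I} → ZMod 2)) := by
    intro w
    obtain ⟨y, hy⟩ := w.2
    exact ⟨y, by rw [← Matrix.mulVecLin_apply]; exact hy⟩
  choose pick hpickspec using hpick
  -- the chosen columns of R
  set colv : W → (Fin b → ZMod 2) :=
    fun w => (fun j => if h : j ∈ J then pick w ⟨j, h⟩ else α ⟨j, h⟩) with hcolv
  set c : W → (Fin a → ZMod 2) → ℝ := fun w u => R u (colv w) with hc
  set fillr :({i : Fin a // i ∈ I} → ZMod 2) → (Fin a → ZMod 2) :=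
    fun x => (fun i => if h : i ∈ I then x ⟨i, h⟩ else β ⟨i, h⟩) with hfillr
  have hentry : ∀ (w : W) (x :({i : Fin a // i ∈ I} → ZMod 2)),
      c w (fillr x) = sgn ((x ⬝ᵥ (w :({i : Fin a // i ∈ I} → ZMod 2))) + φ x + ψ (pick w)) := by
    intro w x
    have h := hcore x (pick w)
    rw [hpickspec] at h
    show R (fillr x) (colv w) = _
    rw [hR]
    exact congrArg sgn h
  haveI : Nonempty ({i : Fin a // i ∈ I} → ZMod 2) := inferInstance
  have hcardX : (Fintype.card ({i : Fin a // i ∈ I} → ZMod 2) : ℝ) ≠ 0 := Nat.cast_ne_zero.mpr Fintype.card_ne_zero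
  -- linear independence of the chosen columns
  have hli : LinearIndependent ℝ c := by
    rw [Fintype.linearIndependent_iff]
    intro g hg w0
    have h0 : ∀ u, ∑ w, g w * c w u = 0 := by
      intro u
      have := congrFun hg u
      simpa [Finset.sum_apply] using this
    have hT : ∀ w : W, (∑ x :({i : Fin a // i ∈ I} → ZMod 2), c w (fillr x) * c w0 (fillr x))
        = if w = w0 then (Fintype.card ({i : Fin a // i ∈ I} → ZMod 2) : ℝ) else 0 := by
      intro w
      by_cases hw : w = w0
      · subst hw
        rw [if_pos rfl]
        have h1 : ∀ x :({i : Fin a // i ∈ I} → ZMod 2), c w (fillr x) * c w (fillr x) = 1 := by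
          intro x; rw [hentry]; exact sgn_sq _
        rw [Finset.sum_congr rfl (fun x _ => h1 x)]
        simp
      · rw [if_neg hw]
        have hne : ((w :({i : Fin a // i ∈ I} → ZMod 2)) + (w0 :({i : Fin a // i ∈ I} → ZMod 2))) ≠ 0 := by
          intro h
          apply hw
          apply Subtype.ext
          funext i
          exact zmod2_add_eq_zero (congrFun h i)
        have h2 : ∀ x :({i : Fin a // i ∈ I} → ZMod 2), c w (fillr x) * c w0 (fillr x)
            = (sgn (ψ (pick w)) * sgn (ψ (pick w0))) * sgn (x ⬝ᵥ ((w :({i : Fin a // i ∈ I} → ZMod 2)) + (w0 :({i : Fin a // i ∈ I} → ZMod 2)))) := by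
          intro x
          rw [hentry, hentry, sgn_add, sgn_add, sgn_add, sgn_add,
            dotProduct_add, sgn_add]
          linear_combination
            (sgn (x ⬝ᵥ (w :({i : Fin a // i ∈ I} → ZMod 2))) * sgn (x ⬝ᵥ (w0 :({i : Fin a // i ∈ I} → ZMod 2))) * sgn (ψ (pick w)) * sgn (ψ (pick w0)))
              * sgn_sq (φ x)
        rw [Finset.sum_congr rfl (fun x _ => h2 x), ← Finset.mul_sum,
          sum_sgn_dot _ hne, mul_zero]
    have key : (0 : ℝ) = ∑ w, g w * ∑ x :({i : Fin a // i ∈ I} → ZMod 2), c w (fillr x) * c w0 (fillr x) := by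
      have e1 : (0 : ℝ) = ∑ x :({i : Fin a // i ∈ I} → ZMod 2), (∑ w, g w * c w (fillr x)) * c w0 (fillr x) := by
        simp [h0]
      rw [e1]
      simp_rw [Finset.sum_mul, Finset.mul_sum, mul_assoc]
      rw [Finset.sum_comm]
    simp_rw [hT] at key
    simp only [mul_ite, mul_zero, Finset.sum_ite_eq', Finset.mem_univ, if_pos] at key
    rcases mul_eq_zero.mp key.symm with h | h
    · exact h
    · exact absurd h hcardX
  -- columns of R span a subspace of dimension ≥ 2^t
  have hsub : Submodule.span ℝ (Set.range c) ≤ Submodule.span ℝ (Set.range Rᵀ) := by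
    apply Submodule.span_mono
    rintro _ ⟨w, rfl⟩
    exact ⟨colv w, rfl⟩
  have hfr : Module.finrank ℝ ↥(Submodule.span ℝ (Set.range c)) = 2 ^ t := by
    rw [finrank_span_eq_card hli, hcardW]
  rw [Matrix.rank_eq_finrank_span_cols, ← hfr]
  exact Submodule.finrank_mono hsub
end

section
/- Rank-drop counterexample: let f : 𝔽₂² × 𝔽₂² → 𝔽₂ be f((u₁,u₂),(v₁,v₂)) = u₁v₁ ⊕ u₂v₂ ⊕ u₁u₂v₁, and let R be the 4×4 real matrix R_{u,v} = (-1)^{f(u,v)}. Then rank_ℝ(R) = 3, whereas the bilinear part of f has coefficient matrix Γ = I₂ of 𝔽₂-rank 2, so rank_ℝ(R) < 2^{rank_{𝔽₂}(Γ)} = 4. -/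
noncomputable def e4 : Fin 4 ≃ (Fin 2 → ZMod 2) :=
  Equiv.ofBijective ![![0,0],![1,0],![0,1],![1,1]] (by decide)

def M4 : Matrix (Fin 4) (Fin 4) ℝ :=
  !![1,1,1,1; 1,-1,1,-1; 1,1,-1,-1; 1,1,-1,-1]

def S3 : Matrix (Fin 3) (Fin 4) ℝ := !![1,1,1,1; 1,-1,1,-1; 1,1,-1,-1]
def E43 : Matrix (Fin 4) (Fin 3) ℝ := !![1,0,0; 0,1,0; 0,0,1; 0,0,1]
def P34 : Matrix (Fin 3) (Fin 4) ℝ := !![1,0,0,0; 0,1,0,0; 0,0,1,0]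
def Q43 : Matrix (Fin 4) (Fin 3) ℝ := !![1,0,0; 0,1,0; 0,0,1; 0,0,0]
def M3 : Matrix (Fin 3) (Fin 3) ℝ := !![1,1,1; 1,-1,1; 1,1,-1]

lemma hfact : M4 = E43 * S3 := by
  ext i j
  fin_cases i <;> fin_cases j <;>
    simp [M4, E43, S3, Matrix.mul_apply, Fin.sum_univ_succ, Matrix.vecHead, Matrix.vecTail]

lemma hminor : P34 * M4 * Q43 = M3 := by
  ext i j
  fin_cases i <;> fin_cases j <;>
    simp [M4, P34, Q43, M3, Matrix.mul_apply, Fin.sum_univ_succ, Matrix.vecHead, Matrix.vecTail]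

lemma hM3rank : M3.rank = 3 := by
  rw [Matrix.rank_of_isUnit]
  · simp
  · rw [Matrix.isUnit_iff_isUnit_det, Matrix.det_fin_three]
    norm_num [M3, isUnit_iff_ne_zero, Matrix.vecHead, Matrix.vecTail, Matrix.cons_val_two]

lemma hM4rank : M4.rank = 3 := by
  refine le_antisymm ?_ ?_
  · calc M4.rank = (E43 * S3).rank := by rw [hfact]
      _ ≤ S3.rank := Matrix.rank_mul_le_right _ _
      _ ≤ Fintype.card (Fin 3) := Matrix.rank_le_card_height _
      _ = 3 := by simp
  · calc (3 : ℕ) = M3.rank := hM3rank.symm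
      _ = (P34 * M4 * Q43).rank := by rw [hminor]
      _ ≤ (P34 * M4).rank := Matrix.rank_mul_le_left _ _
      _ ≤ M4.rank := Matrix.rank_mul_le_right _ _

theorem rank_drop_counterexample
    (f : (Fin 2 → ZMod 2) → (Fin 2 → ZMod 2) → ZMod 2)
    (hf : ∀ u v, f u v = u 0 * v 0 + u 1 * v 1 + u 0 * u 1 * v 0)
    (R : Matrix (Fin 2 → ZMod 2) (Fin 2 → ZMod 2) ℝ)
    (hR : ∀ u v, R u v = sgn (f u v)) :
    R.rank = 3 ∧ (1 : Matrix (Fin 2) (Fin 2) (ZMod 2)).rank = 2 ∧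
      R.rank < 2 ^ (1 : Matrix (Fin 2) (Fin 2) (ZMod 2)).rank := by
  have hsub : R.submatrix e4 e4 = M4 := by
    ext i j
    fin_cases i <;> fin_cases j <;>
      simp [hR, hf, e4, M4, sgn, Equiv.ofBijective, Matrix.vecHead, Matrix.vecTail, show (1+1:ZMod 2)=0 from rfl, show (1+1+1:ZMod 2)=1 from rfl]
  have h1 : R.rank = 3 := by
    rw [← Matrix.rank_submatrix R e4 e4, hsub, hM4rank]
  have h2 : (1 : Matrix (Fin 2) (Fin 2) (ZMod 2)).rank = 2 := by
    rw [Matrix.rank_one]; simp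
  exact ⟨h1, h2, by rw [h1, h2]; norm_num⟩
end
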